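/- Feature hashing concentration via Chebyshev: for x, y ∈ R^n and the global feature hashing estimator into memory of size m, P(|\widehat{⟨x,y⟩}_{G,m} − ⟨x,y⟩| ≥ t) ≤ (1/(m t²)) (Σ_{i≠j} x_i² y_j² + Σ_{i≠j} x_i y_i x_j y_j) for all t > 0. -/

import Mathlib

open Finset

/-- The global feature hashing estimator of the inner product of `x` and `y`. -/
def gEst (n m : ℕ) (h : Fin n → Fin m) (s : Fin n → Bool) (x y : Fin n → ℝ) : ℝ :=
  ∑ j : Fin m,
    (∑ i : Fin n, if h i = j then (if s i then (1:ℝ) else -1) * x i else 0) *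
    (∑ i : Fin n, if h i = j then (if s i then (1:ℝ) else -1) * y i else 0)

/-- The sign ±1 associated to a boolean. -/
def eps (b : Bool) : ℝ := if b then 1 else -1

lemma eps_mul_self (b : Bool) : eps b * eps b = 1 := by cases b <;> norm_num [eps]

lemma eps_not (b : Bool) : eps (!b) = - eps b := by cases b <;> norm_num [eps]

/-- Flip-involution: if `a` differs from `i`, `k`, `b`, the signed sum vanishes. -/
lemma Ssum_zero_a {n : ℕ} (i k a b : Fin n) (hai : a ≠ i) (hak : a ≠ k) (hab : a ≠ b) :
    (∑ s : Fin n → Bool, eps (s i) * eps (s k) * eps (s a) * eps (s b)) = 0 := by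
  have hinv : Function.Involutive (fun s : Fin n → Bool => Function.update s a (!(s a))) := by
    intro s
    funext c
    by_cases hc : c = a
    · subst hc; simp
    · simp [Function.update_of_ne hc]
  set E := hinv.toPerm with hEdef
  have hE : ∀ s : Fin n → Bool, E s = Function.update s a (!(s a)) := fun s => rfl
  set S := (∑ s : Fin n → Bool, eps (s i) * eps (s k) * eps (s a) * eps (s b)) with hS
  have h1 : S = ∑ s : Fin n → Bool,
        eps ((E s) i) * eps ((E s) k) * eps ((E s) a) * eps ((E s) b) :=
    (Equiv.sum_comp E (fun s => eps (s i) * eps (s k) * eps (s a) * eps (s b))).symm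
  have h2 : ∀ s : Fin n → Bool,
      eps ((E s) i) * eps ((E s) k) * eps ((E s) a) * eps ((E s) b)
      = -(eps (s i) * eps (s k) * eps (s a) * eps (s b)) := by
    intro s
    rw [hE]
    rw [Function.update_of_ne (fun h => hai h.symm), Function.update_of_ne (fun h => hak h.symm),
      Function.update_of_ne (fun h => hab h.symm), Function.update_self, eps_not]
    ring
  have h3 : S = -S := by
    conv_lhs => rw [h1]
    rw [Finset.sum_congr rfl (fun s _ => h2 s), Finset.sum_neg_distrib]
  linarith

/-- Symmetric version: flip at `b`. -/
lemma Ssum_zero_b {n : ℕ} (i k a b : Fin n) (hbi : b ≠ i) (hbk : b ≠ k) (hba : b ≠ a) :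
    (∑ s : Fin n → Bool, eps (s i) * eps (s k) * eps (s a) * eps (s b)) = 0 := by
  have := Ssum_zero_a i k b a hbi hbk hba
  rw [← this]
  exact Finset.sum_congr rfl (fun s _ => by ring)
/-- Counting hash collisions: the number of `h` with `h i = h k` is `m^(n-1)`. -/
lemma Hsum_eq {n m : ℕ} (i k : Fin n) (hik : i ≠ k) :
    (∑ h : Fin n → Fin m, if h i = h k then (1:ℝ) else 0) = (m : ℝ) ^ (n - 1) := by
  have h2n : 2 ≤ n := by
    have h1 : 1 < Fintype.card (Fin n) := Fintype.one_lt_card_iff.2 ⟨i, k, hik⟩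
    simp at h1; omega
  -- step 1 : expand the indicator as a sum over buckets
  have step1 : ∀ h : Fin n → Fin m, (if h i = h k then (1:ℝ) else 0)
      = ∑ j : Fin m, (if h i = j then (1:ℝ) else 0) * (if h k = j then 1 else 0) := by
    intro h
    have e1 : ∀ j : Fin m, (if h i = j then (1:ℝ) else 0) * (if h k = j then 1 else 0)
        = if j = h i then (if h k = h i then (1:ℝ) else 0) else 0 := by
      intro j
      by_cases hj : j = h i
      · subst hj; simp
      · rw [if_neg hj, if_neg (fun hh : h i = j => hj hh.symm), zero_mul]
    rw [Finset.sum_congr rfl (fun j _ => e1 j), Finset.sum_ite_eq' univ (h i)]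
    simp [eq_comm]
  rw [Finset.sum_congr rfl (fun h _ => step1 h), Finset.sum_comm]
  -- step 2 : pointwise product form
  have step2 : ∀ (j : Fin m) (h : Fin n → Fin m),
      (if h i = j then (1:ℝ) else 0) * (if h k = j then 1 else 0)
      = ∏ c : Fin n, ((if c = i then (if h c = j then (1:ℝ) else 0) else 1) *
          (if c = k then (if h c = j then (1:ℝ) else 0) else 1)) := by
    intro j h
    rw [Finset.prod_mul_distrib, Finset.prod_ite_eq' univ i (fun c => if h c = j then (1:ℝ) else 0),
      Finset.prod_ite_eq' univ k (fun c => if h c = j then (1:ℝ) else 0)]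
    simp
  have step3 : ∀ j : Fin m,
      (∑ h : Fin n → Fin m, (if h i = j then (1:ℝ) else 0) * (if h k = j then 1 else 0))
      = (m : ℝ) ^ (n - 2) := by
    intro j
    rw [Finset.sum_congr rfl (fun h _ => step2 j h)]
    have factor := Finset.prod_univ_sum (fun _ : Fin n => (univ : Finset (Fin m)))
      (fun c v => (if c = i then (if v = j then (1:ℝ) else 0) else 1) *
          (if c = k then (if v = j then (1:ℝ) else 0) else 1))
    rw [Fintype.piFinset_univ] at factor
    rw [← factor]
    -- evaluate each coordinate factor
    have vals : ∀ c : Fin n, (∑ v : Fin m,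
        (if c = i then (if v = j then (1:ℝ) else 0) else 1) *
          (if c = k then (if v = j then (1:ℝ) else 0) else 1))
        = if c = i ∨ c = k then 1 else (m : ℝ) := by
      intro c
      by_cases hci : c = i
      · subst hci
        rw [if_pos (Or.inl rfl)]
        have : ∀ v : Fin m, (if (c:Fin n) = c then (if v = j then (1:ℝ) else 0) else 1) *
            (if c = k then (if v = j then (1:ℝ) else 0) else 1)
            = if v = j then (1:ℝ) else 0 := by
          intro v
          rw [if_pos rfl, if_neg hik, mul_one]
        rw [Finset.sum_congr rfl (fun v _ => this v), Finset.sum_ite_eq' univ j]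
        simp
      · by_cases hck : c = k
        · subst hck
          rw [if_pos (Or.inr rfl)]
          have : ∀ v : Fin m, (if (c:Fin n) = i then (if v = j then (1:ℝ) else 0) else 1) *
              (if c = c then (if v = j then (1:ℝ) else 0) else 1)
              = if v = j then (1:ℝ) else 0 := by
            intro v
            rw [if_pos rfl, if_neg hci, one_mul]
          rw [Finset.sum_congr rfl (fun v _ => this v), Finset.sum_ite_eq' univ j]
          simp
        · rw [if_neg (by tauto)]
          simp [hci, hck]
    rw [Finset.prod_congr rfl (fun c _ => vals c)]
    -- product of 1's on {i,k} and m elsewhere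
    have hsub : ({i, k} : Finset (Fin n)) ⊆ univ := Finset.subset_univ _
    rw [← Finset.prod_sdiff hsub]
    have hik' : i ∉ ({k} : Finset (Fin n)) := by simp [hik]
    have hpair : Finset.prod ({i, k} : Finset (Fin n))
        (fun c => if c = i ∨ c = k then (1:ℝ) else (m : ℝ)) = 1 := by
      rw [show ({i, k} : Finset (Fin n)) = insert i {k} from rfl,
        Finset.prod_insert hik', Finset.prod_singleton]
      simp
    have hrest : Finset.prod (univ \ ({i, k} : Finset (Fin n)))
        (fun c => if c = i ∨ c = k then (1:ℝ) else (m : ℝ)) = (m:ℝ) ^ (n - 2) := by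
      have : ∀ c ∈ univ \ ({i, k} : Finset (Fin n)),
          (if c = i ∨ c = k then (1:ℝ) else (m : ℝ)) = (m : ℝ) := by
        intro c hc
        simp only [Finset.mem_sdiff, Finset.mem_insert, Finset.mem_singleton] at hc
        rw [if_neg (by tauto)]
      rw [Finset.prod_congr rfl this, Finset.prod_const]
      congr 1
      rw [Finset.card_sdiff_of_subset hsub]
      simp [Finset.card_insert_of_notMem hik']
    rw [hpair, hrest, mul_one]
  rw [Finset.sum_congr rfl (fun j _ => step3 j), Finset.sum_const]
  simp only [Finset.card_univ, Fintype.card_fin, nsmul_eq_mul]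
  rw [← pow_succ']
  congr 1
  omega
lemma Ssum_const_one {n : ℕ} (f : (Fin n → Bool) → ℝ) (hf : ∀ s, f s = 1) :
    (∑ s : Fin n → Bool, f s) = 2 ^ n := by
  rw [Finset.sum_congr rfl (fun s _ => hf s), Finset.sum_const]
  simp [Fintype.card_fun]

lemma mul_ite_collapse {m : ℕ} (u v : Fin m) (A B : ℝ) :
    (∑ j : Fin m, (if u = j then A else 0) * (if v = j then B else 0))
      = if u = v then A * B else 0 := by
  have e1 : ∀ j : Fin m, (if u = j then A else 0) * (if v = j then B else 0)
      = if j = u then (if v = u then A * B else 0) else 0 := by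
    intro j
    by_cases hj : j = u
    · subst hj
      rw [if_pos rfl, if_pos rfl]
      by_cases hv : v = j <;> simp [hv]
    · rw [if_neg (fun hh : u = j => hj hh.symm), zero_mul, if_neg hj]
  rw [Finset.sum_congr rfl (fun j _ => e1 j), Finset.sum_ite_eq' univ u]
  simp [eq_comm]

lemma gEst_expand {n m : ℕ} (h : Fin n → Fin m) (s : Fin n → Bool) (x y : Fin n → ℝ) :
    gEst n m h s x y - (∑ i : Fin n, x i * y i)
    = ∑ q : Fin n × Fin n,
        (if q.1 ≠ q.2 ∧ h q.1 = h q.2 then (eps (s q.1) * x q.1) * (eps (s q.2) * y q.2) else 0) := by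
  have hg : gEst n m h s x y = ∑ i : Fin n, ∑ k : Fin n,
      (if h i = h k then (eps (s i) * x i) * (eps (s k) * y k) else 0) := by
    rw [gEst]
    have e1 : ∀ j : Fin m,
        (∑ i : Fin n, if h i = j then (if s i then (1:ℝ) else -1) * x i else 0) *
        (∑ i : Fin n, if h i = j then (if s i then (1:ℝ) else -1) * y i else 0)
        = ∑ i : Fin n, ∑ k : Fin n,
            (if h i = j then eps (s i) * x i else 0) * (if h k = j then eps (s k) * y k else 0) := by
      intro j
      rw [Finset.sum_mul_sum]
      rfl
    rw [Finset.sum_congr rfl (fun j _ => e1 j), Finset.sum_comm]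
    refine Finset.sum_congr rfl fun i _ => ?_
    rw [Finset.sum_comm]
    refine Finset.sum_congr rfl fun k _ => ?_
    exact mul_ite_collapse (h i) (h k) _ _
  rw [hg]
  have e2 : ∀ i kk : Fin n, (if h i = h kk then (eps (s i) * x i) * (eps (s kk) * y kk) else 0)
      = (if i ≠ kk ∧ h i = h kk then (eps (s i) * x i) * (eps (s kk) * y kk) else 0)
        + (if i = kk then x i * y i else 0) := by
    intro i kk
    by_cases hik : i = kk
    · subst hik
      rw [if_pos rfl, if_pos rfl, if_neg (by tauto), zero_add]
      calc (eps (s i) * x i) * (eps (s i) * y i)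
          = (eps (s i) * eps (s i)) * (x i * y i) := by ring
        _ = x i * y i := by rw [eps_mul_self, one_mul]
    · by_cases hh : h i = h kk <;> simp [hik, hh]
  rw [Finset.sum_congr rfl (fun i _ => Finset.sum_congr rfl (fun kk _ => e2 i kk))]
  rw [Finset.sum_congr rfl (fun i (_ : i ∈ univ) => Finset.sum_add_distrib), Finset.sum_add_distrib]
  have e3 : (∑ i : Fin n, ∑ kk : Fin n, (if i = kk then x i * y i else 0)) = ∑ i : Fin n, x i * y i := by
    refine Finset.sum_congr rfl fun i _ => ?_
    simp
  rw [e3, Fintype.sum_prod_type]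
  ring
lemma inner_eval {n m : ℕ} (x y : Fin n → ℝ) (i k a b : Fin n) :
    (∑ h : Fin n → Fin m, ∑ s : Fin n → Bool,
      (if i ≠ k ∧ h i = h k then (eps (s i) * x i) * (eps (s k) * y k) else 0) *
      (if a ≠ b ∧ h a = h b then (eps (s a) * x a) * (eps (s b) * y b) else 0))
    = if i ≠ k ∧ ((a = i ∧ b = k) ∨ (a = k ∧ b = i))
      then (m:ℝ)^(n-1) * 2^n * (x i * y k * (x a * y b)) else 0 := by
  by_cases hik : i ≠ k
  swap
  · rw [if_neg (by tauto)]
    refine Finset.sum_eq_zero fun h _ => Finset.sum_eq_zero fun s _ => ?_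
    exact mul_eq_zero_of_left (if_neg (by tauto)) _
  by_cases hab : a ≠ b
  swap
  · rw [if_neg (by
      rintro ⟨h1, (⟨rfl, rfl⟩ | ⟨rfl, rfl⟩)⟩
      · exact hab h1
      · exact hab (fun hh => h1 hh.symm))]
    refine Finset.sum_eq_zero fun h _ => Finset.sum_eq_zero fun s _ => ?_
    exact mul_eq_zero_of_right _ (if_neg (by tauto))
  have key : ∀ (h : Fin n → Fin m) (s : Fin n → Bool),
      (if i ≠ k ∧ h i = h k then (eps (s i) * x i) * (eps (s k) * y k) else 0) *
      (if a ≠ b ∧ h a = h b then (eps (s a) * x a) * (eps (s b) * y b) else 0)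
      = ((if h i = h k then (1:ℝ) else 0) * (if h a = h b then 1 else 0)) *
        ((eps (s i) * eps (s k) * eps (s a) * eps (s b)) * (x i * y k * (x a * y b))) := by
    intro h s
    by_cases h1 : h i = h k <;> by_cases h2 : h a = h b <;>
      simp only [h1, h2, hik, hab, and_true, and_false, if_true, if_false, ne_eq,
        not_false_eq_true, true_and, if_pos, zero_mul, mul_zero, one_mul, mul_one] <;>
      first
        | ring
        | simp [h1, h2]
  rw [Finset.sum_congr rfl (fun h _ => Finset.sum_congr rfl (fun s _ => key h s))]
  have e4 : ∀ hh : Fin n → Fin m,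
      (∑ s : Fin n → Bool,
        ((if hh i = hh k then (1:ℝ) else 0) * (if hh a = hh b then 1 else 0)) *
        ((eps (s i) * eps (s k) * eps (s a) * eps (s b)) * (x i * y k * (x a * y b))))
      = ((if hh i = hh k then (1:ℝ) else 0) * (if hh a = hh b then 1 else 0)) *
        ((∑ s : Fin n → Bool, eps (s i) * eps (s k) * eps (s a) * eps (s b)) *
          (x i * y k * (x a * y b))) := by
    intro hh
    rw [← Finset.mul_sum, ← Finset.sum_mul]
  rw [Finset.sum_congr rfl (fun hh _ => e4 hh), ← Finset.sum_mul]
  by_cases hc1 : a = i ∧ b = k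
  · obtain ⟨ha, hb⟩ := hc1
    rw [ha, hb]
    have hH : (∑ h : Fin n → Fin m,
        (if h i = h k then (1:ℝ) else 0) * (if h i = h k then 1 else 0)) = (m:ℝ)^(n-1) := by
      have hpt : ∀ h : Fin n → Fin m,
          (if h i = h k then (1:ℝ) else 0) * (if h i = h k then 1 else 0)
          = if h i = h k then (1:ℝ) else 0 := by
        intro h; by_cases hh : h i = h k <;> simp [hh]
      rw [Finset.sum_congr rfl (fun h _ => hpt h), Hsum_eq i k hik]
    have hS : (∑ s : Fin n → Bool, eps (s i) * eps (s k) * eps (s i) * eps (s k)) = 2^n := by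
      refine Ssum_const_one _ fun s => ?_
      calc eps (s i) * eps (s k) * eps (s i) * eps (s k)
          = (eps (s i) * eps (s i)) * (eps (s k) * eps (s k)) := by ring
        _ = 1 := by rw [eps_mul_self, eps_mul_self, one_mul]
    rw [hH, hS, if_pos ⟨hik, Or.inl ⟨rfl, rfl⟩⟩]
    ring
  by_cases hc2 : a = k ∧ b = i
  · obtain ⟨ha, hb⟩ := hc2
    rw [ha, hb]
    have hH : (∑ h : Fin n → Fin m,
        (if h i = h k then (1:ℝ) else 0) * (if h k = h i then 1 else 0)) = (m:ℝ)^(n-1) := by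
      have hpt : ∀ h : Fin n → Fin m,
          (if h i = h k then (1:ℝ) else 0) * (if h k = h i then 1 else 0)
          = if h i = h k then (1:ℝ) else 0 := by
        intro h
        by_cases hh : h i = h k
        · rw [if_pos hh, if_pos hh.symm, mul_one]
        · rw [if_neg hh, zero_mul]
      rw [Finset.sum_congr rfl (fun h _ => hpt h), Hsum_eq i k hik]
    have hS : (∑ s : Fin n → Bool, eps (s i) * eps (s k) * eps (s k) * eps (s i)) = 2^n := by
      refine Ssum_const_one _ fun s => ?_
      calc eps (s i) * eps (s k) * eps (s k) * eps (s i)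
          = (eps (s i) * eps (s i)) * (eps (s k) * eps (s k)) := by ring
        _ = 1 := by rw [eps_mul_self, eps_mul_self, one_mul]
    rw [hH, hS, if_pos ⟨hik, Or.inr ⟨rfl, rfl⟩⟩]
    ring
  · have hS0 : (∑ s : Fin n → Bool, eps (s i) * eps (s k) * eps (s a) * eps (s b)) = 0 := by
      by_cases hai : a = i
      · subst hai
        refine Ssum_zero_b a k a b ?_ ?_ ?_
        · exact fun hh => hab hh.symm
        · exact fun hh => hc1 ⟨rfl, hh⟩
        · exact fun hh => hab hh.symm
      · by_cases hak : a = k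
        · subst hak
          refine Ssum_zero_b i a a b ?_ ?_ ?_
          · exact fun hh => hc2 ⟨rfl, hh⟩
          · exact fun hh => hab hh.symm
          · exact fun hh => hab hh.symm
        · exact Ssum_zero_a i k a b hai hak hab
    rw [hS0, if_neg (by rintro ⟨-, (h' | h')⟩ <;> tauto)]
    ring
lemma second_moment {n m : ℕ} (x y : Fin n → ℝ) :
    (∑ p : (Fin n → Fin m) × (Fin n → Bool),
        (gEst n m p.1 p.2 x y - ∑ i : Fin n, x i * y i)^2)
    = (m:ℝ)^(n-1) * 2^n *
      ((∑ i : Fin n, ∑ j : Fin n, if i ≠ j then x i ^ 2 * y j ^ 2 else 0)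
        + ∑ i : Fin n, ∑ j : Fin n, if i ≠ j then x i * y i * (x j * y j) else 0) := by
  have step1 : ∀ p : (Fin n → Fin m) × (Fin n → Bool),
      (gEst n m p.1 p.2 x y - ∑ i : Fin n, x i * y i)^2
      = ∑ q : Fin n × Fin n, ∑ r : Fin n × Fin n,
          (if q.1 ≠ q.2 ∧ p.1 q.1 = p.1 q.2
            then (eps (p.2 q.1) * x q.1) * (eps (p.2 q.2) * y q.2) else 0) *
          (if r.1 ≠ r.2 ∧ p.1 r.1 = p.1 r.2
            then (eps (p.2 r.1) * x r.1) * (eps (p.2 r.2) * y r.2) else 0) := by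
    intro p
    rw [gEst_expand p.1 p.2 x y, sq, Finset.sum_mul_sum]
  rw [Finset.sum_congr rfl (fun p _ => step1 p), Finset.sum_comm]
  rw [Finset.sum_congr rfl (fun q (_ : q ∈ univ) => Finset.sum_comm)]
  have step2 : ∀ q r : Fin n × Fin n,
      (∑ p : (Fin n → Fin m) × (Fin n → Bool),
        (if q.1 ≠ q.2 ∧ p.1 q.1 = p.1 q.2
            then (eps (p.2 q.1) * x q.1) * (eps (p.2 q.2) * y q.2) else 0) *
        (if r.1 ≠ r.2 ∧ p.1 r.1 = p.1 r.2
            then (eps (p.2 r.1) * x r.1) * (eps (p.2 r.2) * y r.2) else 0))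
      = if q.1 ≠ q.2 ∧ ((r.1 = q.1 ∧ r.2 = q.2) ∨ (r.1 = q.2 ∧ r.2 = q.1))
        then (m:ℝ)^(n-1) * 2^n * (x q.1 * y q.2 * (x r.1 * y r.2)) else 0 := by
    intro q r
    rw [Fintype.sum_prod_type]
    exact inner_eval x y q.1 q.2 r.1 r.2
  rw [Finset.sum_congr rfl (fun q _ => Finset.sum_congr rfl (fun r _ => step2 q r))]
  have step3 : ∀ q : Fin n × Fin n,
      (∑ r : Fin n × Fin n,
        if q.1 ≠ q.2 ∧ ((r.1 = q.1 ∧ r.2 = q.2) ∨ (r.1 = q.2 ∧ r.2 = q.1))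
        then (m:ℝ)^(n-1) * 2^n * (x q.1 * y q.2 * (x r.1 * y r.2)) else 0)
      = if q.1 ≠ q.2
        then (m:ℝ)^(n-1) * 2^n *
          (x q.1 ^ 2 * y q.2 ^ 2 + x q.1 * y q.1 * (x q.2 * y q.2)) else 0 := by
    intro q
    by_cases hq : q.1 ≠ q.2
    · rw [if_pos hq]
      have e : ∀ r : Fin n × Fin n,
          (if q.1 ≠ q.2 ∧ ((r.1 = q.1 ∧ r.2 = q.2) ∨ (r.1 = q.2 ∧ r.2 = q.1))
            then (m:ℝ)^(n-1) * 2^n * (x q.1 * y q.2 * (x r.1 * y r.2)) else 0)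
          = if r ∈ ({(q.1, q.2), (q.2, q.1)} : Finset (Fin n × Fin n))
            then (m:ℝ)^(n-1) * 2^n * (x q.1 * y q.2 * (x r.1 * y r.2)) else 0 := by
        intro r
        refine if_congr ?_ rfl rfl
        simp [Finset.mem_insert, Finset.mem_singleton, Prod.ext_iff, hq]
      rw [Finset.sum_congr rfl (fun r _ => e r), Finset.sum_ite_mem, Finset.univ_inter]
      have hne : ((q.1, q.2) : Fin n × Fin n) ≠ (q.2, q.1) := by
        simp only [ne_eq, Prod.mk.injEq, not_and]
        exact fun h _ => hq h
      rw [Finset.sum_pair hne]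
      ring
    · rw [if_neg hq]
      exact Finset.sum_eq_zero fun r _ => if_neg (by tauto)
  rw [Finset.sum_congr rfl (fun q _ => step3 q), Fintype.sum_prod_type]
  rw [mul_add, Finset.mul_sum, Finset.mul_sum, ← Finset.sum_add_distrib]
  refine Finset.sum_congr rfl fun i _ => ?_
  rw [Finset.mul_sum, Finset.mul_sum, ← Finset.sum_add_distrib]
  refine Finset.sum_congr rfl fun j _ => ?_
  by_cases hij : i ≠ j
  · rw [if_pos hij, if_pos hij, if_pos hij]
    ring
  · rw [if_neg hij, if_neg hij, if_neg hij]; norm_num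

/-- Feature hashing concentration via Chebyshev: the probability (over uniformly random
hash and independent signs) that the estimator deviates from `⟨x,y⟩` by at least `t`
is at most `(1/(m t²)) (Σ_{i≠j} x_i² y_j² + Σ_{i≠j} x_i y_i x_j y_j)`. -/
theorem featureHashing_chebyshev (n m : ℕ) (hm : 0 < m) (x y : Fin n → ℝ)
    (t : ℝ) (ht : 0 < t) :
    ((Finset.univ.filter
        (fun p : (Fin n → Fin m) × (Fin n → Bool) =>
          t ≤ |gEst n m p.1 p.2 x y - ∑ i : Fin n, x i * y i|)).card : ℝ)
      / ((m : ℝ) ^ n * 2 ^ n)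
    ≤ (1 / ((m : ℝ) * t ^ 2)) *
        ((∑ i : Fin n, ∑ j : Fin n, if i ≠ j then x i ^ 2 * y j ^ 2 else 0)
          + ∑ i : Fin n, ∑ j : Fin n, if i ≠ j then x i * y i * (x j * y j) else 0) := by
  by_cases hn : n = 0
  · subst hn
    have hcard : (Finset.univ.filter
        (fun p : (Fin 0 → Fin m) × (Fin 0 → Bool) =>
          t ≤ |gEst 0 m p.1 p.2 x y - ∑ i : Fin 0, x i * y i|)) = ∅ := by
      refine Finset.filter_eq_empty_iff.2 fun p _ => ?_
      have hg : gEst 0 m p.1 p.2 x y = 0 := by simp [gEst]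
      rw [hg]
      simp [not_le, ht]
    rw [hcard]
    simp
  · have hn1 : 1 ≤ n := Nat.one_le_iff_ne_zero.2 hn
    set A := (∑ i : Fin n, ∑ j : Fin n, if i ≠ j then x i ^ 2 * y j ^ 2 else 0) with hA
    set B := (∑ i : Fin n, ∑ j : Fin n, if i ≠ j then x i * y i * (x j * y j) else 0) with hB
    set F := (Finset.univ.filter
        (fun p : (Fin n → Fin m) × (Fin n → Bool) =>
          t ≤ |gEst n m p.1 p.2 x y - ∑ i : Fin n, x i * y i|)) with hF
    have markov : (F.card : ℝ) * t^2
        ≤ ∑ p : (Fin n → Fin m) × (Fin n → Bool),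
            (gEst n m p.1 p.2 x y - ∑ i : Fin n, x i * y i)^2 := by
      have h1 : (F.card : ℝ) * t^2 = ∑ _p ∈ F, t^2 := by
        rw [Finset.sum_const, nsmul_eq_mul]
      rw [h1]
      refine le_trans (Finset.sum_le_sum fun p hp => ?_)
        (Finset.sum_le_sum_of_subset_of_nonneg (Finset.subset_univ F)
          (fun p _ _ => sq_nonneg _))
      have hp' : t ≤ |gEst n m p.1 p.2 x y - ∑ i : Fin n, x i * y i| :=
        (Finset.mem_filter.1 hp).2
      calc t^2 ≤ |gEst n m p.1 p.2 x y - ∑ i : Fin n, x i * y i|^2 :=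
            pow_le_pow_left₀ ht.le hp' 2
        _ = (gEst n m p.1 p.2 x y - ∑ i : Fin n, x i * y i)^2 := sq_abs _
    have hbound : (F.card : ℝ) * t^2 ≤ (m:ℝ)^(n-1) * 2^n * (A + B) := by
      calc (F.card : ℝ) * t^2 ≤ _ := markov
        _ = (m:ℝ)^(n-1) * 2^n * (A + B) := second_moment x y
    have hm' : (0:ℝ) < m := by exact_mod_cast hm
    have hN : (0:ℝ) < (m:ℝ)^n * 2^n := by positivity
    have ht2 : (0:ℝ) < t^2 := by positivity
    have hpow : (m:ℝ)^(n-1) * m = (m:ℝ)^n := by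
      rw [← pow_succ]
      congr 1
      omega
    rw [div_le_iff₀ hN]
    calc (F.card:ℝ) ≤ (m:ℝ)^(n-1) * 2^n * (A + B) / t^2 := by
          rw [le_div_iff₀ ht2]; exact hbound
      _ = 1/((m:ℝ)*t^2) * (A + B) * ((m:ℝ)^n * 2^n) := by
          rw [← hpow]
          field_simp
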